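/- Let γ > 0 and let ψ ∈ L²(ℝ, ℂ) be such that x ↦ x·ψ(x) is also in L²(ℝ, ℂ). Then 𝔅_γψ is complex-differentiable on ℂ and for every z ∈ ℂ, (d/dz)(𝔅_γψ)(z) = −(4/γ²)·z·𝔅_γψ(z) + (2√2/γ²)·𝔅_γ[x ↦ x·ψ(x)](z). -/

import Mathlib

open MeasureTheory Complex

/-- The RBF Segal–Bargmann transform
`𝔅_γψ(z) = (2/(πγ²))^{1/4} ∫_ℝ exp(−(x − √2 z)²/γ²) ψ(x) dx`. -/
lemma aux_gauss_memL2 {b : ℝ} (hb : 0 < b) (a : ℝ) :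
    MemLp (fun x : ℝ => Real.exp (-b * (x - a) ^ 2)) 2 volume := by
  rw [memLp_two_iff_integrable_sq (Continuous.aestronglyMeasurable (by continuity))]
  have h : Integrable (fun x : ℝ => Real.exp (-(2 * b) * x ^ 2)) volume :=
    integrable_exp_neg_mul_sq (by linarith)
  have h2 := h.comp_sub_right a
  refine h2.congr ?_
  filter_upwards with x
  rw [← Real.exp_nat_mul]
  ring_nf

lemma aux_int {b : ℝ} (hb : 0 < b) (a : ℝ) {f : ℝ → ℝ} (hf : MemLp f 2 volume) :
    Integrable (fun x => Real.exp (-b * (x - a) ^ 2) * f x) volume := by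
  have h := hf.smul (aux_gauss_memL2 hb a) (r := 1)
  rw [memLp_one_iff_integrable] at h
  simpa [Pi.smul_apply, smul_eq_mul, Pi.mul_def] using h

lemma re_aux (γ : ℝ) (z : ℂ) (x : ℝ) :
    (-(((x : ℂ) - (Real.sqrt 2 : ℂ) * z) ^ 2) / (γ : ℂ) ^ 2).re
      = (-(x - Real.sqrt 2 * z.re) ^ 2 + 2 * z.im ^ 2) / γ ^ 2 := by
  have h2 : Real.sqrt 2 ^ 2 = 2 := Real.sq_sqrt (by norm_num)
  rw [show ((γ : ℂ) ^ 2) = ((γ ^ 2 : ℝ) : ℂ) by push_cast; ring, Complex.div_ofReal_re]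
  congr 1
  simp [pow_two, Complex.sub_re, Complex.sub_im, Complex.mul_re, Complex.mul_im,
    Complex.ofReal_re, Complex.ofReal_im]
  nlinarith [h2]

lemma norm_ker (γ : ℝ) (z : ℂ) (x : ℝ) :
    ‖Complex.exp (-((x : ℂ) - (Real.sqrt 2 : ℂ) * z) ^ 2 / (γ : ℂ) ^ 2)‖
      = Real.exp ((-(x - Real.sqrt 2 * z.re) ^ 2 + 2 * z.im ^ 2) / γ ^ 2) := by
  rw [Complex.norm_exp, neg_div, ← neg_div]
  rw [re_aux]

lemma ker_integrable {γ : ℝ} (hγ : 0 < γ) {ψ : ℝ → ℂ} (hψ : MemLp ψ 2 volume) (z : ℂ) :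
    Integrable (fun x : ℝ =>
      Complex.exp (-((x : ℂ) - (Real.sqrt 2 : ℂ) * z) ^ 2 / (γ : ℂ) ^ 2) * ψ x) volume := by
  have hb : (0:ℝ) < 1 / γ ^ 2 := by positivity
  apply Integrable.mono' (g := fun x => Real.exp (2 * z.im ^ 2 / γ ^ 2) *
      (Real.exp (-(1 / γ ^ 2) * (x - Real.sqrt 2 * z.re) ^ 2) * ‖ψ x‖))
  · exact ((aux_int hb (Real.sqrt 2 * z.re) hψ.norm).const_mul _)
  · exact (Continuous.aestronglyMeasurable (by continuity)).mul hψ.1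
  · filter_upwards with x
    rw [norm_mul, norm_ker]
    apply le_of_eq
    rw [show (-(x - Real.sqrt 2 * z.re) ^ 2 + 2 * z.im ^ 2) / γ ^ 2
        = 2 * z.im ^ 2 / γ ^ 2 + (-(1 / γ ^ 2) * (x - Real.sqrt 2 * z.re) ^ 2) by
      field_simp; ring]
    rw [Real.exp_add]; ring

noncomputable def rbfSB (γ : ℝ) (ψ : ℝ → ℂ) (z : ℂ) : ℂ :=
  (((2 / (Real.pi * γ ^ 2)) ^ ((1 : ℝ) / 4) : ℝ) : ℂ) *
    ∫ x : ℝ, Complex.exp (-((x : ℂ) - (Real.sqrt 2 : ℂ) * z) ^ 2 / (γ : ℂ) ^ 2) * ψ x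

set_option maxHeartbeats 1000000 in
theorem rbfSB_derivative (γ : ℝ) (hγ : 0 < γ) (ψ : ℝ → ℂ)
    (hψ : MemLp ψ 2 volume)
    (hxψ : MemLp (fun x : ℝ => (x : ℂ) * ψ x) 2 volume) :
    ∀ z : ℂ,
      HasDerivAt (rbfSB γ ψ)
        (-(4 / (γ : ℂ) ^ 2) * z * rbfSB γ ψ z +
          (2 * (Real.sqrt 2 : ℂ) / (γ : ℂ) ^ 2) * rbfSB γ (fun x => (x : ℂ) * ψ x) z) z := by
  intro z₀
  set sR : ℝ := Real.sqrt 2 with hsR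
  have hsnn : (0:ℝ) ≤ sR := Real.sqrt_nonneg 2
  have hs2 : sR ^ 2 = 2 := Real.sq_sqrt (by norm_num)
  set s : ℂ := (sR : ℂ) with hsdef
  have hs2c : s * s = 2 := by
    rw [hsdef, ← Complex.ofReal_mul, ← pow_two, hs2]; norm_num
  set c : ℂ := (γ : ℂ) ^ 2 with hc
  set F : ℂ → ℝ → ℂ := fun z x => Complex.exp (-((x : ℂ) - s * z) ^ 2 / c) * ψ x with hF
  set G : ℂ → ℝ → ℂ := fun z x =>
    Complex.exp (-((x : ℂ) - s * z) ^ 2 / c) * ((x : ℂ) * ψ x) with hG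
  set F' : ℂ → ℝ → ℂ := fun z x =>
    Complex.exp (-((x : ℂ) - s * z) ^ 2 / c) * (2 * s * ((x : ℂ) - s * z) / c) * ψ x with hF'
  have hFint : ∀ z, Integrable (F z) volume := fun z => ker_integrable hγ hψ z
  have hGint : ∀ z, Integrable (G z) volume := fun z => ker_integrable hγ hxψ z
  -- constants for the bound
  set K : ℝ := Real.exp ((2 + 2 * (|z₀.im| + 1) ^ 2) / γ ^ 2) with hK
  set C : ℝ := sR * (‖z₀‖ + 1) with hC
  set bound : ℝ → ℝ := fun x => K * (2 * sR / γ ^ 2) *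
      ((|x| + C) * (Real.exp (-(1 / (2 * γ ^ 2)) * (x - sR * z₀.re) ^ 2) * ‖ψ x‖)) with hbound
  have hb2 : (0:ℝ) < 1 / (2 * γ ^ 2) := by positivity
  have hbound_int : Integrable bound volume := by
    have h1 : Integrable (fun x : ℝ =>
        Real.exp (-(1 / (2 * γ ^ 2)) * (x - sR * z₀.re) ^ 2) * ‖(x : ℂ) * ψ x‖) volume :=
      aux_int hb2 _ hxψ.norm
    have h2 : Integrable (fun x : ℝ =>
        Real.exp (-(1 / (2 * γ ^ 2)) * (x - sR * z₀.re) ^ 2) * ‖ψ x‖) volume :=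
      aux_int hb2 _ hψ.norm
    have heq : (fun x : ℝ => (|x| + C) *
        (Real.exp (-(1 / (2 * γ ^ 2)) * (x - sR * z₀.re) ^ 2) * ‖ψ x‖))
        = fun x => Real.exp (-(1 / (2 * γ ^ 2)) * (x - sR * z₀.re) ^ 2) * ‖(x : ℂ) * ψ x‖
          + C * (Real.exp (-(1 / (2 * γ ^ 2)) * (x - sR * z₀.re) ^ 2) * ‖ψ x‖) := by
      funext x
      rw [norm_mul, Complex.norm_real, Real.norm_eq_abs]
      ring
    rw [hbound]
    apply Integrable.const_mul
    rw [heq]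
    exact h1.add (h2.const_mul C)
  -- measurability of F and F'
  have hFmeas : ∀ z : ℂ, AEStronglyMeasurable (F z) volume := fun z =>
    (Continuous.aestronglyMeasurable (by fun_prop)).mul hψ.1
  have hF'meas : AEStronglyMeasurable (F' z₀) volume :=
    ((Continuous.aestronglyMeasurable (by fun_prop)).mul hψ.1)
  -- the bound
  have h_bound : ∀ᵐ x : ℝ ∂volume, ∀ w ∈ Metric.ball z₀ 1, ‖F' w x‖ ≤ bound x := by
    filter_upwards with x
    intro w hw
    have hwz : ‖w - z₀‖ < 1 := by
      simpa [Complex.dist_eq] using (Metric.mem_ball.mp hw)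
    have hre : |w.re - z₀.re| ≤ 1 := by
      have := Complex.abs_re_le_norm (w - z₀)
      simp only [Complex.sub_re] at this
      linarith
    have him : |w.im| ≤ |z₀.im| + 1 := by
      have h1 := Complex.abs_im_le_norm (w - z₀)
      simp only [Complex.sub_im] at h1
      have := abs_sub_abs_le_abs_sub w.im z₀.im
      linarith
    have habs : ‖w‖ ≤ ‖z₀‖ + 1 := by
      have h1 := norm_sub_norm_le w z₀
      linarith
    -- norm of F'
    have hn : ‖F' w x‖ = Real.exp ((-(x - sR * w.re) ^ 2 + 2 * w.im ^ 2) / γ ^ 2)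
        * (2 * sR / γ ^ 2 * ‖(x : ℂ) - s * w‖) * ‖ψ x‖ := by
      have hnc : ‖c‖ = γ ^ 2 := by
        rw [hc, norm_pow, Complex.norm_real, Real.norm_eq_abs, _root_.sq_abs]
      have h2n : ‖(2 : ℂ)‖ = 2 := by norm_num
      rw [hF']
      simp only [norm_mul, norm_div]
      rw [norm_ker γ w x, hnc, h2n, hsdef, Complex.norm_real, Real.norm_eq_abs,
        _root_.abs_of_nonneg hsnn, ← hsR]
      ring
    have e1 : Real.exp ((-(x - sR * w.re) ^ 2 + 2 * w.im ^ 2) / γ ^ 2)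
        ≤ K * Real.exp (-(1 / (2 * γ ^ 2)) * (x - sR * z₀.re) ^ 2) := by
      rw [hK, ← Real.exp_add]
      apply Real.exp_le_exp.2
      have hγ2 : (0:ℝ) < γ ^ 2 := by positivity
      have hd : (w.re - z₀.re) ^ 2 ≤ 1 := by
        nlinarith [_root_.sq_abs (w.re - z₀.re), abs_nonneg (w.re - z₀.re)]
      have hq : (x - sR * z₀.re) ^ 2 ≤ 2 * (x - sR * w.re) ^ 2 + 4 := by
        nlinarith [sq_nonneg ((x - sR * w.re) - sR * (w.re - z₀.re)), hs2,
          sq_nonneg (w.re - z₀.re)]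
      have him2 : w.im ^ 2 ≤ (|z₀.im| + 1) ^ 2 := by
        nlinarith [_root_.sq_abs w.im, abs_nonneg w.im]
      have key : -(x - sR * w.re) ^ 2 + 2 * w.im ^ 2
          ≤ (2 + 2 * (|z₀.im| + 1) ^ 2) + (-(x - sR * z₀.re) ^ 2 / 2) := by nlinarith
      have hmain := (div_le_div_iff_of_pos_right hγ2).2 key
      have heqr : ((2 + 2 * (|z₀.im| + 1) ^ 2) + (-(x - sR * z₀.re) ^ 2 / 2)) / γ ^ 2
          = (2 + 2 * (|z₀.im| + 1) ^ 2) / γ ^ 2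
            + (-(1 / (2 * γ ^ 2)) * (x - sR * z₀.re) ^ 2) := by
        rw [add_div, div_div]; ring
      rw [heqr] at hmain
      exact hmain
    have e2 : ‖(x : ℂ) - s * w‖ ≤ |x| + C := by
      have h1 := norm_sub_le ((x : ℂ)) (s * w)
      have h2 : ‖(x : ℂ)‖ = |x| := by rw [Complex.norm_real, Real.norm_eq_abs]
      have h3 : ‖s * w‖ ≤ C := by
        rw [norm_mul, hsdef, Complex.norm_real, Real.norm_eq_abs,
          _root_.abs_of_nonneg hsnn, hC]
        exact mul_le_mul_of_nonneg_left habs hsnn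
      calc ‖(x : ℂ) - s * w‖ ≤ ‖(x : ℂ)‖ + ‖s * w‖ := h1
        _ ≤ |x| + C := by rw [h2]; linarith
    have h3 : Real.exp ((-(x - sR * w.re) ^ 2 + 2 * w.im ^ 2) / γ ^ 2) * ‖(x : ℂ) - s * w‖
        ≤ (K * Real.exp (-(1 / (2 * γ ^ 2)) * (x - sR * z₀.re) ^ 2)) * (|x| + C) :=
      mul_le_mul e1 e2 (norm_nonneg _) (by positivity)
    rw [hn, hbound]
    calc Real.exp ((-(x - sR * w.re) ^ 2 + 2 * w.im ^ 2) / γ ^ 2)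
          * (2 * sR / γ ^ 2 * ‖(x : ℂ) - s * w‖) * ‖ψ x‖
        = (2 * sR / γ ^ 2)
            * (Real.exp ((-(x - sR * w.re) ^ 2 + 2 * w.im ^ 2) / γ ^ 2) * ‖(x : ℂ) - s * w‖)
            * ‖ψ x‖ := by ring
      _ ≤ (2 * sR / γ ^ 2)
            * ((K * Real.exp (-(1 / (2 * γ ^ 2)) * (x - sR * z₀.re) ^ 2)) * (|x| + C))
            * ‖ψ x‖ := by
          exact mul_le_mul_of_nonneg_right
            (mul_le_mul_of_nonneg_left h3 (by positivity)) (norm_nonneg _)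
      _ = K * (2 * sR / γ ^ 2)
            * ((|x| + C) * (Real.exp (-(1 / (2 * γ ^ 2)) * (x - sR * z₀.re) ^ 2) * ‖ψ x‖)) := by
          ring
  -- differentiability in the parameter
  have h_diff : ∀ᵐ x : ℝ ∂volume, ∀ w ∈ Metric.ball z₀ 1,
      HasDerivAt (fun w => F w x) (F' w x) w := by
    filter_upwards with x
    intro w _
    have h1 : HasDerivAt (fun w : ℂ => (x : ℂ) - s * w) (-s) w := by
      simpa using ((hasDerivAt_id w).const_mul s).const_sub ((x : ℂ))
    have h4 := (((h1.pow 2).neg.div_const c).cexp).mul_const (ψ x)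
    convert h4 using 1
    · rfl
    · rfl
    · rfl
    rw [hF']
    simp only [Pi.neg_apply, Pi.pow_apply]
    push_cast
    ring
  have key := hasDerivAt_integral_of_dominated_loc_of_deriv_le (μ := volume) (x₀ := z₀)
    (F := F) (F' := F') (bound := bound) (Metric.ball_mem_nhds z₀ one_pos)
    (Filter.Eventually.of_forall hFmeas) (hFint z₀) hF'meas h_bound hbound_int h_diff
  obtain ⟨-, hderiv⟩ := key
  have hpt : ∀ x : ℝ, F' z₀ x = -(4 / c) * z₀ * F z₀ x + (2 * s / c) * G z₀ x := by
    intro x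
    rw [hF', hF, hG]
    simp only
    linear_combination (-(2 * Complex.exp (-((x : ℂ) - s * z₀) ^ 2 / c) * ψ x * z₀ / c)) * hs2c
  have hint : (∫ x : ℝ, F' z₀ x)
      = -(4 / c) * z₀ * (∫ x : ℝ, F z₀ x) + (2 * s / c) * ∫ x : ℝ, G z₀ x := by
    rw [integral_congr_ae (Filter.Eventually.of_forall hpt)]
    rw [integral_add (((hFint z₀).const_mul _)) (((hGint z₀).const_mul _)),
      integral_const_mul, integral_const_mul]
  rw [hint] at hderiv
  have final := hderiv.const_mul ((((2 / (Real.pi * γ ^ 2)) ^ ((1 : ℝ) / 4) : ℝ) : ℂ))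
  have hfun : rbfSB γ ψ
      = fun w => (((2 / (Real.pi * γ ^ 2)) ^ ((1 : ℝ) / 4) : ℝ) : ℂ) * ∫ x : ℝ, F w x := rfl
  have hval1 : rbfSB γ ψ z₀
      = (((2 / (Real.pi * γ ^ 2)) ^ ((1 : ℝ) / 4) : ℝ) : ℂ) * ∫ x : ℝ, F z₀ x := rfl
  have hval2 : rbfSB γ (fun x => (x : ℂ) * ψ x) z₀
      = (((2 / (Real.pi * γ ^ 2)) ^ ((1 : ℝ) / 4) : ℝ) : ℂ) * ∫ x : ℝ, G z₀ x := rfl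
  have heq2 : (((2 / (Real.pi * γ ^ 2)) ^ ((1 : ℝ) / 4) : ℝ) : ℂ)
        * (-(4 / c) * z₀ * (∫ x : ℝ, F z₀ x) + 2 * s / c * ∫ x : ℝ, G z₀ x)
      = -(4 / c) * z₀
          * ((((2 / (Real.pi * γ ^ 2)) ^ ((1 : ℝ) / 4) : ℝ) : ℂ) * (∫ x : ℝ, F z₀ x))
        + 2 * s / c
          * ((((2 / (Real.pi * γ ^ 2)) ^ ((1 : ℝ) / 4) : ℝ) : ℂ) * ∫ x : ℝ, G z₀ x) := by
    ring
  rw [hval1, hval2, hfun, ← heq2]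
  exact final
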